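/- Let δ₁, δ₂, … be a sequence of real numbers tending to 0. Let W = {x ∈ ℝ | there exist infinitely many rationals q with |x − q| < δ_{denom(q)}}. Then W is almost equal (with respect to Lebesgue measure) to either the empty set or all of ℝ. -/

import Mathlib

open MeasureTheory Filter

private lemma gallagher_null_preimage {S : Set (AddCircle (1:ℝ))} (hS : volume S = 0) :
    volume (((↑) : ℝ → AddCircle (1:ℝ)) ⁻¹' S) = 0 := by
  haveI : Fact ((0:ℝ) < 1) := ⟨one_pos⟩
  set T := toMeasurable volume S with hT
  have hTm : MeasurableSet T := measurableSet_toMeasurable _ _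
  have hTn : volume T = 0 := by rw [measure_toMeasurable]; exact hS
  have key : ∀ k : ℤ, volume ((((↑) : ℝ → AddCircle (1:ℝ)) ⁻¹' T) ∩ Set.Ioc (k:ℝ) (k+1)) = 0 := by
    intro k
    have := (AddCircle.measurePreserving_mk (T := 1) (k:ℝ)).measure_preimage
      hTm.nullMeasurableSet
    rw [Measure.restrict_apply] at this
    · rw [this, hTn]
    · exact measurableSet_preimage (by measurability) hTm
  have cover : (((↑) : ℝ → AddCircle (1:ℝ)) ⁻¹' T) ⊆ ⋃ k : ℤ,
      ((((↑) : ℝ → AddCircle (1:ℝ)) ⁻¹' T) ∩ Set.Ioc (k:ℝ) (k+1)) := by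
    intro x hx
    refine Set.mem_iUnion.mpr ⟨⌈x⌉ - 1, hx, ?_, ?_⟩
    · push_cast; linarith [Int.ceil_lt_add_one x]
    · push_cast; linarith [Int.le_ceil x]
  refine measure_mono_null (Set.preimage_mono (subset_toMeasurable volume S)) ?_
  refine measure_mono_null cover ?_
  exact le_antisymm ((measure_iUnion_le _).trans (by simp [key])) zero_le

private lemma gallagher_norm_coe_le_abs (y : ℝ) : ‖((y : ℝ) : UnitAddCircle)‖ ≤ |y| := by
  rw [AddCircle.norm_eq]
  simpa using round_le y 0

private lemma gallagher_equiv (x : ℝ) (n : ℕ) (d : ℝ) :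
    (∃ q : ℚ, q.den = n ∧ |x - (q : ℝ)| < d) ↔
    (∃ m, m < n ∧ Nat.gcd m n = 1 ∧ ‖((x : UnitAddCircle)) - ↑(((m : ℕ) : ℝ) / (n : ℝ))‖ < d) := by
  haveI : Fact ((0:ℝ) < 1) := ⟨one_pos⟩
  constructor
  · rintro ⟨q, rfl, hq⟩
    have hn : 0 < q.den := q.pos
    have horder : addOrderOf ((q : ℝ) : UnitAddCircle) = q.den := by
      simpa using (AddCircle.addOrderOf_coe_rat (p := (1:ℝ)) (q := q))
    obtain ⟨m, hm, hgcd, hmn⟩ := (AddCircle.addOrderOf_eq_pos_iff hn).mp horder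
    refine ⟨m, hm, hgcd, ?_⟩
    rw [mul_one] at hmn
    rw [hmn]
    calc ‖((x : UnitAddCircle)) - ((q : ℝ) : UnitAddCircle)‖
        = ‖((x - (q:ℝ) : ℝ) : UnitAddCircle)‖ := by rw [AddCircle.coe_sub]
      _ ≤ |x - (q : ℝ)| := gallagher_norm_coe_le_abs _
      _ < d := hq
  · rintro ⟨m, hm, hgcd, hnorm⟩
    have hn : 0 < n := lt_of_le_of_lt (Nat.zero_le m) hm
    have h1 : ‖(((x - (m : ℝ) / n) : ℝ) : UnitAddCircle)‖ < d := by
      have : ((x : UnitAddCircle)) - ↑(((m:ℕ) : ℝ) / (n : ℝ))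
          = (((x - (m : ℝ) / n) : ℝ) : UnitAddCircle) := by rw [AddCircle.coe_sub]
      rwa [this] at hnorm
    rw [AddCircle.norm_eq] at h1
    simp only [inv_one, one_mul, mul_one] at h1
    set k : ℤ := round (x - (m : ℝ) / n) with hk
    have hcop : ((m : ℤ) + k * n).natAbs.Coprime n := by
      have h2 : IsCoprime ((m : ℤ)) ((n : ℤ)) := by
        rw [Int.isCoprime_iff_gcd_eq_one, Int.gcd_natCast_natCast]; exact hgcd
      have h3 : IsCoprime ((m : ℤ) + k * n) ((n : ℤ)) := h2.add_mul_right_left k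
      rw [Int.isCoprime_iff_gcd_eq_one] at h3
      simpa [Int.gcd] using h3
    refine ⟨⟨(m : ℤ) + k * n, n, hn.ne', hcop⟩, rfl, ?_⟩
    have hq : ((⟨(m : ℤ) + k * n, n, hn.ne', hcop⟩ : ℚ) : ℝ)
        = (m : ℝ) / n + k := by
      rw [Rat.cast_def]
      push_cast
      field_simp
    rw [hq]
    calc |x - ((m : ℝ) / n + k)| = |x - (m:ℝ)/n - k| := by ring_nf
      _ < d := h1

theorem gallagher_reals (δ : ℕ → ℝ) (hδ : Tendsto δ atTop (nhds 0))
    (W : Set ℝ)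
    (hW : W = {x : ℝ | {n : ℕ | ∃ q : ℚ, q.den = n ∧ |x - (q : ℝ)| < δ n}.Infinite}) :
    W =ᵐ[volume] (∅ : Set ℝ) ∨ W =ᵐ[volume] (Set.univ : Set ℝ) := by
  haveI : Fact ((0:ℝ) < 1) := ⟨one_pos⟩
  set S := addWellApproximable UnitAddCircle δ with hS
  have hpre : W = ((↑) : ℝ → UnitAddCircle) ⁻¹' S := by
    rw [hW]
    ext x
    simp only [Set.mem_setOf_eq, Set.mem_preimage, hS,
      UnitAddCircle.mem_addWellApproximable_iff]
    have hsets : {n : ℕ | ∃ q : ℚ, q.den = n ∧ |x - (q : ℝ)| < δ n}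
        = {n : ℕ | ∃ m < n, Nat.gcd m n = 1 ∧
            ‖((x : UnitAddCircle)) - ↑(((m : ℕ) : ℝ) / (n : ℝ))‖ < δ n} := by
      ext n
      simpa using gallagher_equiv x n (δ n)
    rw [hsets]
    rfl
  rcases AddCircle.addWellApproximable_ae_empty_or_univ (T := 1) δ hδ with h | h
  · left
    rw [MeasureTheory.ae_eq_empty, hpre]
    apply gallagher_null_preimage
    have : volume {y : UnitAddCircle | y ∈ S} = 0 := by
      simpa [ae_iff] using h
    simpa using this
  · right
    rw [MeasureTheory.ae_eq_univ, hpre, ← Set.preimage_compl]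
    apply gallagher_null_preimage
    have : volume {y : UnitAddCircle | ¬ y ∈ S} = 0 := by
      simpa [ae_iff] using h
    exact this
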